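/- Let A ∈ ℂ^{m×n} with singular value decomposition A = Σᵢ σᵢ uᵢ vᵢ†, and let f : [0,∞) → ℂ with f(0) = 0. Define f̄(x) := f(x)/x for x > 0 and f̄(0) := 0. Then A† f̄(AA†) A = f(A†A), where for a Hermitian positive semidefinite matrix M with eigendecomposition M = Σᵢ λᵢ wᵢwᵢ†, g(M) := Σᵢ g(λᵢ) wᵢwᵢ†. -/

import Mathlib

open Matrix BigOperators

/-- Eigenvalue transformation of a Hermitian matrix `M = Σᵢ λᵢ wᵢwᵢᴴ` by `g : ℝ → ℂ`:
`g(M) := Σᵢ g(λᵢ) wᵢwᵢᴴ`, defined via a unitary eigendecomposition. -/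
noncomputable def hermFun {n : ℕ} {M : Matrix (Fin n) (Fin n) ℂ}
    (hM : M.IsHermitian) (g : ℝ → ℂ) : Matrix (Fin n) (Fin n) ℂ :=
  (hM.eigenvectorUnitary : Matrix (Fin n) (Fin n) ℂ) *
    Matrix.diagonal (g ∘ hM.eigenvalues) *
    (hM.eigenvectorUnitary : Matrix (Fin n) (Fin n) ℂ)ᴴ

namespace Stmt17Aux

open Polynomial

/-- Conjugation by a unitary matrix, as an algebra homomorphism. -/
noncomputable def conjAlgHom {n : ℕ} (U : Matrix (Fin n) (Fin n) ℂ)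
    (h1 : star U * U = 1) (h2 : U * star U = 1) :
    Matrix (Fin n) (Fin n) ℂ →ₐ[ℂ] Matrix (Fin n) (Fin n) ℂ where
  toFun X := U * X * star U
  map_one' := by show U * 1 * star U = 1; rw [mul_one, h2]
  map_mul' X Y := by
    show U * (X * Y) * star U = U * X * star U * (U * Y * star U)
    have h : U * X * star U * (U * Y * star U) = U * X * (star U * U) * (Y * star U) := by
      simp only [mul_assoc]
    rw [h, h1, mul_one]
    simp only [mul_assoc]
  map_zero' := by simp
  map_add' X Y := by
    show U * (X + Y) * star U = U * X * star U + U * Y * star U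
    simp only [mul_add, add_mul]
  commutes' r := by
    show U * algebraMap ℂ _ r * star U = algebraMap ℂ _ r
    simp only [Algebra.algebraMap_eq_smul_one, smul_mul_assoc, mul_smul_comm, mul_one, one_mul, h2]

lemma aeval_conj {n : ℕ} (U : Matrix (Fin n) (Fin n) ℂ)
    (h1 : star U * U = 1) (h2 : U * star U = 1)
    (D : Matrix (Fin n) (Fin n) ℂ) (p : ℂ[X]) :
    aeval (U * D * star U) p = U * aeval D p * star U :=
  aeval_algHom_apply (conjAlgHom U h1 h2) D p

lemma aeval_diag {n : ℕ} (d : Fin n → ℂ) (p : ℂ[X]) :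
    aeval (Matrix.diagonal d) p = Matrix.diagonal (fun i => p.eval (d i)) := by
  have h := aeval_algHom_apply (Matrix.diagonalAlgHom (R := ℂ) (n := Fin n) (α := ℂ)) d p
  rw [Matrix.diagonalAlgHom_apply] at h
  rw [h]
  have hfun : (aeval d p : Fin n → ℂ) = fun i => p.eval (d i) := by
    funext i
    have h2 := aeval_algHom_apply (Pi.evalAlgHom ℂ (fun _ : Fin n => ℂ) i) d p
    simp only [Pi.evalAlgHom_apply] at h2
    rw [← h2, aeval_def, eval₂_eq_eval_map]
    simp [Polynomial.map_id]
  rw [hfun, Matrix.diagonalAlgHom_apply]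

lemma hermFun_eq_aeval {n : ℕ} {M : Matrix (Fin n) (Fin n) ℂ} (hM : M.IsHermitian)
    (g : ℝ → ℂ) (p : ℂ[X])
    (hp : ∀ i, p.eval ((hM.eigenvalues i : ℝ) : ℂ) = g (hM.eigenvalues i)) :
    hermFun hM g = aeval M p := by
  have h1 : star (hM.eigenvectorUnitary : Matrix (Fin n) (Fin n) ℂ) *
      (hM.eigenvectorUnitary : Matrix (Fin n) (Fin n) ℂ) = 1 :=
    Matrix.mem_unitaryGroup_iff'.mp hM.eigenvectorUnitary.2
  have h2 : (hM.eigenvectorUnitary : Matrix (Fin n) (Fin n) ℂ) *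
      star (hM.eigenvectorUnitary : Matrix (Fin n) (Fin n) ℂ) = 1 :=
    Matrix.mem_unitaryGroup_iff.mp hM.eigenvectorUnitary.2
  conv_rhs => rw [hM.spectral_theorem, Unitary.conjStarAlgAut_apply, aeval_conj _ h1 h2, aeval_diag]
  unfold hermFun
  rw [← Matrix.star_eq_conjTranspose]
  have hd : Matrix.diagonal (g ∘ hM.eigenvalues)
      = Matrix.diagonal (fun i => p.eval ((RCLike.ofReal ∘ hM.eigenvalues) i)) :=
    congrArg Matrix.diagonal (funext fun i => (hp i).symm)
  rw [hd]

lemma aeval_semiconj {m n : ℕ} (X : Matrix (Fin m) (Fin m) ℂ) (Y : Matrix (Fin n) (Fin n) ℂ)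
    (A : Matrix (Fin m) (Fin n) ℂ) (h : X * A = A * Y) (p : ℂ[X]) :
    aeval X p * A = A * aeval Y p := by
  have hpow : ∀ k : ℕ, X ^ k * A = A * Y ^ k := by
    intro k
    induction k with
    | zero => simp
    | succ k ih =>
      rw [pow_succ, pow_succ, Matrix.mul_assoc, h, ← Matrix.mul_assoc, ih, Matrix.mul_assoc]
  induction p using Polynomial.induction_on' with
  | add p q hp hq =>
    simp only [map_add, Matrix.add_mul, Matrix.mul_add, hp, hq]
  | monomial k c =>
    simp only [aeval_monomial, Algebra.algebraMap_eq_smul_one, smul_mul_assoc, one_mul,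
      mul_smul_comm, Matrix.smul_mul, Matrix.mul_smul]
    rw [hpow]

end Stmt17Aux

open Polynomial Stmt17Aux in
/-- Even singular value transformation identity: for `f` with `f(0) = 0` and
`f̄(x) = f(x)/x` (with `f̄(0) = 0`), one has `Aᴴ f̄(AAᴴ) A = f(AᴴA)`. -/
theorem stmt17 {m n : ℕ} (A : Matrix (Fin m) (Fin n) ℂ)
    (f : ℝ → ℂ) (hf0 : f 0 = 0)
    (fbar : ℝ → ℂ) (hfbar : ∀ x, fbar x = if x = 0 then 0 else f x / x) :
    Aᴴ * hermFun (Matrix.isHermitian_mul_conjTranspose_self A) fbar * A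
      = hermFun (Matrix.isHermitian_conjTranspose_mul_self A) f := by
  classical
  set hC := Matrix.isHermitian_mul_conjTranspose_self A with hhC
  set hB := Matrix.isHermitian_conjTranspose_mul_self A with hhB
  set s : Finset ℂ :=
    (Finset.univ.image (fun i => ((hC.eigenvalues i : ℝ) : ℂ))) ∪
      (Finset.univ.image (fun j => ((hB.eigenvalues j : ℝ) : ℂ))) with hs
  set p : ℂ[X] := Lagrange.interpolate s id (fun z => fbar z.re) with hp
  have hinj : Set.InjOn id (s : Set ℂ) := Function.injective_id.injOn
  have hpeval : ∀ z ∈ s, p.eval z = fbar z.re := fun z hz =>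
    Lagrange.eval_interpolate_at_node _ hinj hz
  -- p interpolates fbar at eigenvalues of A * Aᴴ
  have hpC : ∀ i, p.eval ((hC.eigenvalues i : ℝ) : ℂ) = fbar (hC.eigenvalues i) := by
    intro i
    have hz : ((hC.eigenvalues i : ℝ) : ℂ) ∈ s := by
      rw [hs]
      exact Finset.mem_union_left _ (Finset.mem_image_of_mem _ (Finset.mem_univ i))
    rw [hpeval _ hz, Complex.ofReal_re]
  -- X * p interpolates f at eigenvalues of Aᴴ * A
  have hqB : ∀ j, (Polynomial.X * p).eval ((hB.eigenvalues j : ℝ) : ℂ) = f (hB.eigenvalues j) := by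
    intro j
    have hz : ((hB.eigenvalues j : ℝ) : ℂ) ∈ s := by
      rw [hs]
      exact Finset.mem_union_right _ (Finset.mem_image_of_mem _ (Finset.mem_univ j))
    rw [eval_mul, eval_X, hpeval _ hz, Complex.ofReal_re, hfbar]
    by_cases h0 : hB.eigenvalues j = 0
    · simp [h0, hf0]
    · rw [if_neg h0]
      rw [mul_div_cancel₀ _ (by exact_mod_cast h0)]
  rw [hermFun_eq_aeval hC fbar p hpC, hermFun_eq_aeval hB f (Polynomial.X * p) hqB]
  have hsemi : aeval (A * Aᴴ) p * A = A * aeval (Aᴴ * A) p :=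
    aeval_semiconj (A * Aᴴ) (Aᴴ * A) A (Matrix.mul_assoc A Aᴴ A) p
  rw [_root_.map_mul, aeval_X, Matrix.mul_assoc, hsemi, ← Matrix.mul_assoc]
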